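/- Classification calibration of the SD-loss: if p* ∈ Δ_J° has a unique maximal coordinate i (p_i* > p_j* for all j ≠ i), then any p minimizing the conditional SD-risk r_{β,λ}(p*, ·) over Δ_J satisfies argmax_j p_j = i, i.e., the induced classifier agrees with the Bayes classifier. -/

import Mathlib

open Real

/-- Young-type inequality: strict version. -/
lemma sd_key_lt {A B s x y : ℝ} (hA : 0 < A) (hB : 0 < B) (hs : s = A + B)
    (hx : 0 ≤ x) (hy : 0 < y) (hxy : x ≠ y) :
    s * (x ^ B * y ^ A) < B * x ^ s + A * y ^ s := by
  have hspos : 0 < s := by rw [hs]; linarith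
  rcases eq_or_lt_of_le hx with hx0 | hxpos
  · rw [← hx0, Real.zero_rpow hB.ne', Real.zero_rpow hspos.ne']
    have := Real.rpow_pos_of_pos hy s
    nlinarith
  · -- x > 0
    set t : ℝ := x / y with ht
    have htpos : 0 < t := div_pos hxpos hy
    set u : ℝ := t ^ B with hu
    have hupos : 0 < u := Real.rpow_pos_of_pos htpos B
    have hune : u ≠ 1 := by
      intro h
      have hlog : B * Real.log t = 0 := by
        rw [← Real.log_rpow htpos, ← hu, h, Real.log_one]
      have hlt : Real.log t = 0 := by
        rcases mul_eq_zero.1 hlog with h' | h'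
        · exact absurd h' hB.ne'
        · exact h'
      have : t = 1 := by
        have := Real.exp_log htpos
        rw [hlt, Real.exp_zero] at this
        linarith
      rw [ht, div_eq_one_iff_eq hy.ne'] at this
      exact hxy this
    have hp : 1 < s / B := by rw [hs]; rw [lt_div_iff₀ hB]; linarith
    have hbern := one_add_mul_self_lt_rpow_one_add (s := u - 1)
      (by linarith) (by intro h; apply hune; linarith) hp
    rw [add_sub_cancel] at hbern
    have hup : u ^ (s / B) = t ^ s := by
      rw [hu, ← Real.rpow_mul htpos.le]
      congr 1
      field_simp
    rw [hup] at hbern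
    -- multiply by B * y ^ s
    have hys : 0 < y ^ s := Real.rpow_pos_of_pos hy s
    have h1 : t ^ s * y ^ s = x ^ s := by
      rw [ht, Real.div_rpow hxpos.le hy.le]; field_simp
    have h2 : u * y ^ s = x ^ B * y ^ A := by
      rw [hu, ht, Real.div_rpow hxpos.le hy.le]
      rw [hs, Real.rpow_add hy]
      field_simp
    have hmul : (1 + s / B * (u - 1)) * (B * y ^ s) < t ^ s * (B * y ^ s) := by
      exact mul_lt_mul_of_pos_right hbern (by positivity)
    have hexp : (1 + s / B * (u - 1)) * (B * y ^ s)
        = B * y ^ s + s * (u * y ^ s) - s * y ^ s := by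
      field_simp; ring
    rw [hexp, h2] at hmul
    nlinarith [hmul, h1, h2]

lemma sd_key_le {A B s x y : ℝ} (hA : 0 < A) (hB : 0 < B) (hs : s = A + B)
    (hx : 0 ≤ x) (hy : 0 < y) :
    s * (x ^ B * y ^ A) ≤ B * x ^ s + A * y ^ s := by
  by_cases hxy : x = y
  · subst hxy
    rw [← Real.rpow_add hy, add_comm B A, ← hs]
    nlinarith [Real.rpow_pos_of_pos hy s]
  · exact (sd_key_lt hA hB hs hx hy hxy).le

open Finset

/-- The conditional SD-risk `r_{β,λ}(p*, p)`. -/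
noncomputable def condSDRisk (A B beta : ℝ) {J : ℕ} (pstar p : Fin J → ℝ) : ℝ :=
  (1 / A) * ∑ j, (p j ^ (1 + beta)
    - ((1 + beta) / B) * p j ^ B * pstar j ^ A
    + (A / B) * pstar j ^ (1 + beta))

/-- Classification calibration of the SD-loss: if `p*` (strictly positive) has a
unique maximal coordinate `i`, then any minimizer of the conditional SD-risk
over the simplex has its argmax at `i`. -/
theorem sdLoss_classification_calibrated (J : ℕ) (hJ : 2 ≤ J)
    (beta lam A B : ℝ) (hbeta0 : 0 ≤ beta) (hbeta1 : beta ≤ 1)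
    (hA : A = 1 + lam * (1 - beta)) (hB : B = beta - lam * (1 - beta))
    (hApos : 0 < A) (hBpos : 0 < B)
    (pstar : Fin J → ℝ) (hps : ∀ j, 0 < pstar j) (hpssum : ∑ j, pstar j = 1)
    (i : Fin J) (hi : ∀ j, j ≠ i → pstar j < pstar i)
    (p : Fin J → ℝ) (hp0 : ∀ j, 0 ≤ p j) (hpsum : ∑ j, p j = 1)
    (hmin : ∀ q : Fin J → ℝ, (∀ j, 0 ≤ q j) → ∑ j, q j = 1 →
      condSDRisk A B beta pstar p ≤ condSDRisk A B beta pstar q) :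
    ∀ j, j ≠ i → p j < p i := by
  set s : ℝ := 1 + beta with hsdef
  have hsAB : s = A + B := by rw [hsdef, hA, hB]; ring
  -- the risk at pstar is zero
  have hrstar : condSDRisk A B beta pstar pstar = 0 := by
    unfold condSDRisk
    rw [← hsdef]
    have : ∀ j ∈ univ, (pstar j ^ s - s / B * pstar j ^ B * pstar j ^ A
        + A / B * pstar j ^ s) = 0 := by
      intro j _
      have hkey : pstar j ^ B * pstar j ^ A = pstar j ^ s := by
        rw [← Real.rpow_add (hps j), add_comm B A, ← hsAB]
      rw [mul_assoc, hkey]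
      have h2 : (1 : ℝ) + beta = A + B := hsAB
      field_simp
      linear_combination (-(pstar j ^ s)) * h2
    rw [Finset.sum_congr rfl this]
    simp
  -- each term of the risk at p is nonnegative
  have hterm : ∀ j, 0 ≤ p j ^ s - s / B * p j ^ B * pstar j ^ A
      + A / B * pstar j ^ s := by
    intro j
    have h := sd_key_le hApos hBpos hsAB (hp0 j) (hps j)
    have hrw : p j ^ s - s / B * p j ^ B * pstar j ^ A + A / B * pstar j ^ s
        = (B * p j ^ s + A * pstar j ^ s - s * (p j ^ B * pstar j ^ A)) / B := by
      field_simp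
      ring
    rw [hrw]
    exact div_nonneg (by linarith) hBpos.le
  -- minimality forces risk at p to be ≤ 0, hence each term = 0
  have hle := hmin pstar (fun j => (hps j).le) hpssum
  rw [hrstar] at hle
  have hsum0 : ∑ j, (p j ^ s - s / B * p j ^ B * pstar j ^ A
      + A / B * pstar j ^ s) = 0 := by
    have hge : 0 ≤ ∑ j, (p j ^ s - s / B * p j ^ B * pstar j ^ A
        + A / B * pstar j ^ s) := Finset.sum_nonneg fun j _ => hterm j
    have hle' : condSDRisk A B beta pstar p ≤ 0 := hle
    unfold condSDRisk at hle'
    rw [← hsdef] at hle'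
    have h0 : (1 / A) * ∑ j, (p j ^ s - s / B * p j ^ B * pstar j ^ A
        + A / B * pstar j ^ s) = 0 :=
      le_antisymm hle' (mul_nonneg (one_div_pos.mpr hApos).le hge)
    rcases mul_eq_zero.mp h0 with h' | h'
    · exact absurd h' (one_div_pos.mpr hApos).ne'
    · exact h'
  -- hence each term equals 0 and p = pstar
  have heq : ∀ j, p j = pstar j := by
    intro j
    by_contra hne
    have hlt := sd_key_lt hApos hBpos hsAB (hp0 j) (hps j) hne
    have hjpos : 0 < p j ^ s - s / B * p j ^ B * pstar j ^ A
        + A / B * pstar j ^ s := by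
      have : p j ^ s - s / B * p j ^ B * pstar j ^ A + A / B * pstar j ^ s
          = (B * p j ^ s + A * pstar j ^ s - s * (p j ^ B * pstar j ^ A)) / B := by
        field_simp; ring
      rw [this]
      have : 0 < B * p j ^ s + A * pstar j ^ s - s * (p j ^ B * pstar j ^ A) := by
        linarith
      positivity
    have hsplit := Finset.sum_eq_zero_iff_of_nonneg
      (fun k (_ : k ∈ univ) => hterm k) |>.mp hsum0 j (mem_univ j)
    linarith
  intro j hj
  rw [heq j, heq i]
  exact hi j hj
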